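/- A union ⋃_{t ∈ R} U_t of principal upper classes intersected with K([0,1]^ω) is open in the hyperspace K([0,1]^ω) if and only if R is nice, i.e., whenever R contains some positive type or ∞, it contains (m,0) for some m > 0. -/
import Mathlib


open Topology TopologicalSpace Set

/-- The hyperspace of compact subsets (including `∅`) of `X`. -/
def Kt (X : Type*) [TopologicalSpace X] : Type _ := {A : Set X // IsCompact A}

/-- The Vietoris topology on the hyperspace, generated by the sets
`U⁺ = {A : A ⊆ U}` and `U⁻ = {A : A ∩ U ≠ ∅}` for `U` open. -/
instance Kt.topology (X : Type*) [TopologicalSpace X] : TopologicalSpace (Kt X) :=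
  TopologicalSpace.generateFrom
    ({S | ∃ U : Set X, IsOpen U ∧ S = {A : Kt X | A.1 ⊆ U}} ∪
     {S | ∃ U : Set X, IsOpen U ∧ S = {A : Kt X | (A.1 ∩ U).Nonempty}})

/-- The Hilbert cube `[0,1]^ω`. -/
abbrev HilbertCube : Type := ℕ → unitInterval

open scoped Classical in
/-- The type of a space: the pair (number of connected components, number of
nondegenerate components) if the number of components is finite; `none` (= `∞`) otherwise. -/
noncomputable def typeOf (K : Type*) [TopologicalSpace K] : Option (ℕ × ℕ) :=
  if Finite (ConnectedComponents K) then
    some (Nat.card (ConnectedComponents K),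
      Nat.card {c : ConnectedComponents K |
        ¬ ({x : K | ConnectedComponents.mk x = c} : Set K).Subsingleton})
  else none

/-- The order on the type poset `T ∪ {∞}` (`none` plays the role of `∞`):
`(0,0)` is comparable only with itself, positive finite types are ordered by the
product order, and `∞` is above every positive finite type. -/
def tle : Option (ℕ × ℕ) → Option (ℕ × ℕ) → Prop
  | none, none => True
  | none, some _ => False
  | some p, none => 0 < p.1
  | some p, some q => (p = (0, 0) ∧ q = (0, 0)) ∨ (0 < p.1 ∧ p.1 ≤ q.1 ∧ p.2 ≤ q.2)

/-- Membership in the type poset `T ∪ {∞}`: finite types are pairs `(m, n)` with `m ≥ n`. -/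
def isType : Option (ℕ × ℕ) → Prop
  | none => True
  | some p => p.2 ≤ p.1

section Aux
variable {X : Type*} [TopologicalSpace X]

lemma kt_isOpen_sub (U : Set X) (hU : IsOpen U) : IsOpen {A : Kt X | A.1 ⊆ U} :=
  TopologicalSpace.GenerateOpen.basic _ (Or.inl ⟨U, hU, rfl⟩)

lemma kt_isOpen_hit (U : Set X) (hU : IsOpen U) : IsOpen {A : Kt X | (A.1 ∩ U).Nonempty} :=
  TopologicalSpace.GenerateOpen.basic _ (Or.inr ⟨U, hU, rfl⟩)

/-- Any open set in the Vietoris hyperspace containing `K` contains all compact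
supersets-of-a-finite-core inside `K`. -/
lemma kt_finite_approx {S : Set (Kt X)} (hS : IsOpen S) (K : Kt X) (hK : K ∈ S) :
    ∃ D : Set X, D.Finite ∧ D ⊆ K.1 ∧
      ∀ F : Set X, ∀ hF : F.Finite, D ⊆ F → F ⊆ K.1 → (⟨F, hF.isCompact⟩ : Kt X) ∈ S := by
  have hS' : TopologicalSpace.GenerateOpen
      ({S | ∃ U : Set X, IsOpen U ∧ S = {A : Kt X | A.1 ⊆ U}} ∪
       {S | ∃ U : Set X, IsOpen U ∧ S = {A : Kt X | (A.1 ∩ U).Nonempty}}) S := hS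
  clear hS
  induction hS' with
  | basic s hs =>
    rcases hs with ⟨U, hU, rfl⟩ | ⟨U, hU, rfl⟩
    · exact ⟨∅, finite_empty, empty_subset _, fun F hF _ hFK => hFK.trans hK⟩
    · obtain ⟨x, hxK, hxU⟩ := hK
      exact ⟨{x}, finite_singleton x, singleton_subset_iff.2 hxK,
        fun F hF hDF _ => ⟨x, hDF rfl, hxU⟩⟩
  | univ => exact ⟨∅, finite_empty, empty_subset _, fun F hF _ _ => trivial⟩
  | inter s t hs ht ihs iht =>
    obtain ⟨D1, hD1f, hD1K, h1⟩ := ihs hK.1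
    obtain ⟨D2, hD2f, hD2K, h2⟩ := iht hK.2
    exact ⟨D1 ∪ D2, hD1f.union hD2f, union_subset hD1K hD2K,
      fun F hF hDF hFK => ⟨h1 F hF ((subset_union_left).trans hDF) hFK,
        h2 F hF ((subset_union_right).trans hDF) hFK⟩⟩
  | sUnion T hT ih =>
    obtain ⟨t, htT, hKt⟩ := hK
    obtain ⟨D, hDf, hDK, h⟩ := ih t htT hKt
    exact ⟨D, hDf, hDK, fun F hF hDF hFK => ⟨t, htT, h F hF hDF hFK⟩⟩

end Aux

section TypeOf
variable {Y : Type*} [TopologicalSpace Y]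

lemma mk_bijective_of_tds [TotallyDisconnectedSpace Y] :
    Function.Bijective (ConnectedComponents.mk : Y → ConnectedComponents Y) := by
  refine ⟨fun x y h => ?_, ConnectedComponents.surjective_coe⟩
  have h1 := ConnectedComponents.coe_eq_coe.1 h
  have h2 := totallyDisconnectedSpace_iff_connectedComponent_singleton.1 ‹_›
  have := (h2 x).symm.trans (h1.trans (h2 y))
  exact singleton_eq_singleton_iff.1 this

lemma typeOf_eq_of_finite (h : Finite (ConnectedComponents Y)) :
    typeOf Y = some (Nat.card (ConnectedComponents Y),
      Nat.card {c : ConnectedComponents Y |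
        ¬ ({x : Y | ConnectedComponents.mk x = c} : Set Y).Subsingleton}) := by
  rw [typeOf, if_pos h]

lemma typeOf_eq_of_infinite (h : Infinite (ConnectedComponents Y)) :
    typeOf Y = none := by
  rw [typeOf, if_neg (not_finite_iff_infinite.2 h)]

lemma typeOf_of_finite [T1Space Y] [Finite Y] : typeOf Y = some (Nat.card Y, 0) := by
  have : TotallyDisconnectedSpace Y := inferInstance
  have hbij := mk_bijective_of_tds (Y := Y)
  have hfin : Finite (ConnectedComponents Y) := Finite.of_surjective _ hbij.2
  rw [typeOf_eq_of_finite hfin]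
  have hcard : Nat.card (ConnectedComponents Y) = Nat.card Y :=
    (Nat.card_eq_of_bijective _ hbij).symm
  have : {c : ConnectedComponents Y |
        ¬ ({x : Y | ConnectedComponents.mk x = c} : Set Y).Subsingleton} = ∅ := by
      ext c
      simp only [mem_setOf_eq, mem_empty_iff_false, iff_false, not_not]
      intro x hx y hy
      exact hbij.1 (hx.trans hy.symm)
  rw [hcard, this]
  simp
end TypeOf

section Cantor

/-- The Cantor set `{0,1}^ω` inside the Hilbert cube. -/
def cantorK : Set HilbertCube := {x | ∀ i, x i = 0 ∨ x i = 1}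

lemma cantorK_isCompact : IsCompact cantorK := by
  have : IsClosed cantorK := by
    have : cantorK = ⋂ i, (fun x : HilbertCube => x i) ⁻¹' {0, 1} := by
      ext x; simp [cantorK, Set.mem_iInter]
    rw [this]
    exact isClosed_iInter fun i =>
      (Set.Finite.isClosed (by simp : ({0, 1} : Set unitInterval).Finite)).preimage
        (continuous_apply i)
  exact this.isCompact

lemma cantorK_td : IsTotallyDisconnected cantorK := by
  intro t hts hpre x hx y hy
  by_contra hxy
  obtain ⟨i, hi⟩ : ∃ i, x i ≠ y i := by
    by_contra h
    push_neg at h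
    exact hxy (funext h)
  set f : HilbertCube → ℝ := fun z => (z i : ℝ) with hf
  have hfc : Continuous f := continuous_induced_dom.comp (continuous_apply i)
  have himg : IsPreconnected (f '' t) := hpre.image f hfc.continuousOn
  have hsub : f '' t ⊆ {0, 1} := by
    rintro - ⟨z, hz, rfl⟩
    rcases hts hz i with h | h <;> simp [f, h]
  have hic : (x i : ℝ) ≠ (y i : ℝ) := fun h => hi (Subtype.ext h)
  have h0 : (0 : ℝ) ∈ f '' t ∧ (1 : ℝ) ∈ f '' t := by
    rcases hts hx i with h1 | h1 <;> rcases hts hy i with h2 | h2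
    · exact absurd (by rw [h1, h2]) hic
    · exact ⟨⟨x, hx, by simp [f, h1]⟩, ⟨y, hy, by simp [f, h2]⟩⟩
    · exact ⟨⟨y, hy, by simp [f, h2]⟩, ⟨x, hx, by simp [f, h1]⟩⟩
    · exact absurd (by rw [h1, h2]) hic
  have := himg.Icc_subset h0.1 h0.2
  have hmem : (1/2 : ℝ) ∈ f '' t := this (by norm_num)
  rcases hsub hmem with h | h <;> norm_num at h

lemma cantorK_infinite : cantorK.Infinite := by
  have : Function.Injective (fun n : ℕ => (fun i => if i = n then 1 else 0 : HilbertCube)) := by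
    intro a b hab
    by_contra h
    have := congrFun hab a
    simp [h] at this
  refine Set.infinite_of_injective_forall_mem (f := fun n : ℕ =>
    (fun i => if i = n then 1 else 0 : HilbertCube)) this (fun n i => ?_)
  by_cases h : i = n <;> simp [h]

lemma cantorK_cc_infinite : Infinite (ConnectedComponents ↥cantorK) := by
  have : TotallyDisconnectedSpace ↥cantorK :=
    totallyDisconnectedSpace_subtype_iff.2 cantorK_td
  have hbij := mk_bijective_of_tds (Y := ↥cantorK)
  have : Infinite ↥cantorK := cantorK_infinite.to_subtype
  exact (Equiv.ofBijective _ hbij).infinite_iff.1 this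

end Cantor

section Sep
variable {X : Type*} [TopologicalSpace X]

/-- A connected component (as a subset of the ambient space) that meets two of the
pairwise disjoint open sets covering `L` forces the indices to agree. -/
lemma index_eq_of_mk_eq {ι : Type*} {V : ι → Set X} (hVo : ∀ i, IsOpen (V i))
    (hd : Pairwise (Function.onFun Disjoint V)) {L : Set X} (hsub : L ⊆ ⋃ i, V i)
    {i j : ι} {x y : ↥L} (hx : ↑x ∈ V i) (hy : ↑y ∈ V j)
    (h : ConnectedComponents.mk x = ConnectedComponents.mk y) : i = j := by
  by_contra hij
  have hyx : y ∈ connectedComponent x :=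
    ConnectedComponents.coe_eq_coe'.1 h.symm
  set s : Set X := Subtype.val '' connectedComponent x with hs
  have hpre : IsPreconnected s :=
    isPreconnected_connectedComponent.image _ continuous_subtype_val.continuousOn
  have hsL : s ⊆ L := by rintro - ⟨z, _, rfl⟩; exact z.2
  have hcover : s ⊆ V i ∪ ⋃ l ∈ {l | l ≠ i}, V l := by
    intro z hz
    rcases mem_iUnion.1 (hsub (hsL hz)) with ⟨l, hl⟩
    by_cases hli : l = i
    · exact Or.inl (hli ▸ hl)
    · exact Or.inr (mem_biUnion hli hl)
  have hne1 : (s ∩ V i).Nonempty := ⟨x, ⟨x, mem_connectedComponent, rfl⟩, hx⟩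
  have hne2 : (s ∩ ⋃ l ∈ {l | l ≠ i}, V l).Nonempty :=
    ⟨y, ⟨y, hyx, rfl⟩, mem_biUnion (Ne.symm hij) hy⟩
  obtain ⟨z, -, hz1, hz2⟩ := hpre (V i) (⋃ l ∈ {l | l ≠ i}, V l) (hVo i)
    (isOpen_biUnion fun l _ => hVo l) hcover hne1 hne2
  rcases mem_iUnion₂.1 hz2 with ⟨l, hl, hzl⟩
  exact (Set.disjoint_left.1 (hd hl) hzl) hz1

/-- Finitely many pairwise disjoint compact sets in a `T2` space can be separated
by pairwise disjoint open sets. -/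
lemma exists_disjoint_opens [T2Space X] {ι : Type*} [Finite ι]
    (Q : ι → Set X) (hQ : ∀ i, IsCompact (Q i)) (hd : Pairwise (Function.onFun Disjoint Q)) :
    ∃ V : ι → Set X, (∀ i, IsOpen (V i)) ∧ (∀ i, Q i ⊆ V i) ∧
      Pairwise (Function.onFun Disjoint V) := by
  classical
  obtain ⟨e⟩ : Nonempty (ι ↪ Fin (Nat.card ι)) := by
    have := Fintype.ofFinite ι
    exact ⟨(Fintype.equivFin ι).toEmbedding.trans
      (Fin.castOrderIso (by simp [Nat.card_eq_fintype_card])).toEquiv.toEmbedding⟩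
  letI : LinearOrder ι := LinearOrder.lift' (fun i => e i) e.injective
  have hsep : ∀ i j, i ≠ j → ∃ UV : Set X × Set X,
      IsOpen UV.1 ∧ IsOpen UV.2 ∧ Q i ⊆ UV.1 ∧ Q j ⊆ UV.2 ∧ Disjoint UV.1 UV.2 := by
    intro i j hij
    obtain ⟨U, W, hU, hW, hQU, hQW, hUW⟩ :=
      SeparatedNhds.of_isCompact_isCompact (hQ i) (hQ j) (hd hij)
    exact ⟨(U, W), hU, hW, hQU, hQW, hUW⟩
  set F : ι → ι → Set X × Set X := fun i j =>
    if h : i ≠ j then (hsep i j h).choose else (univ, univ) with hF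
  have hFspec : ∀ i j (h : i ≠ j), IsOpen (F i j).1 ∧ IsOpen (F i j).2 ∧
      Q i ⊆ (F i j).1 ∧ Q j ⊆ (F i j).2 ∧ Disjoint (F i j).1 (F i j).2 := by
    intro i j h
    simp only [hF, dif_pos h]
    exact (hsep i j h).choose_spec
  set W : ι → ι → Set X := fun i j =>
    if i < j then (F i j).1 else if j < i then (F j i).2 else univ with hW
  refine ⟨fun i => ⋂ j, W i j, ?_, ?_, ?_⟩
  · intro i
    refine isOpen_iInter_of_finite fun j => ?_
    by_cases h1 : i < j
    · simpa [hW, h1] using (hFspec i j h1.ne).1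
    · by_cases h2 : j < i
      · simp only [hW, if_neg h1, if_pos h2]
        exact (hFspec j i h2.ne).2.1
      · simp [hW, h1, h2]
  · intro i
    refine subset_iInter fun j => ?_
    by_cases h1 : i < j
    · simpa [hW, h1] using (hFspec i j h1.ne).2.2.1
    · by_cases h2 : j < i
      · simp only [hW, if_neg h1, if_pos h2]
        exact (hFspec j i h2.ne).2.2.2.1
      · simp [hW, h1, h2]
  · have key : ∀ i j : ι, i < j → Disjoint (⋂ l, W i l) (⋂ l, W j l) := by
      intro i j h
      refine Set.disjoint_of_subset (iInter_subset _ j) (iInter_subset _ i) ?_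
      have e1 : W i j = (F i j).1 := by simp [hW, h]
      have e2 : W j i = (F i j).2 := by simp [hW, asymm h, h]
      rw [e1, e2]
      exact (hFspec i j h.ne).2.2.2.2
    intro i j hij
    rcases hij.lt_or_gt with h | h
    · exact key i j h
    · exact (key j i h).symm
end Sep

section Clopen
variable {X : Type*} [TopologicalSpace X]

lemma exists_clopen_sep [T2Space X] [CompactSpace X] {x y : X}
    (h : ConnectedComponents.mk x ≠ ConnectedComponents.mk y) :
    ∃ Z : Set X, IsClopen Z ∧ x ∈ Z ∧ y ∉ Z := by
  have hy : y ∉ connectedComponent x := fun hy =>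
    h (ConnectedComponents.coe_eq_coe'.2 hy).symm
  rw [connectedComponent_eq_iInter_isClopen] at hy
  simp only [mem_iInter, not_forall] at hy
  obtain ⟨⟨Z, hZ, hxZ⟩, hyZ⟩ := hy
  exact ⟨Z, hZ, hxZ, hyZ⟩

lemma exists_clopen_partition [T2Space X] [CompactSpace X] {k : ℕ} (hk : 0 < k)
    (x : Fin k → X)
    (hx : ∀ i j, i ≠ j → ConnectedComponents.mk (x i) ≠ ConnectedComponents.mk (x j)) :
    ∃ P : Fin k → Set X, (∀ i, IsClopen (P i)) ∧ (∀ i, x i ∈ P i) ∧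
      Pairwise (Function.onFun Disjoint P) ∧ ⋃ i, P i = univ := by
  classical
  set i₀ : Fin k := ⟨0, hk⟩ with hi₀
  have hsep : ∀ i j, i ≠ j → ∃ Z : Set X, IsClopen Z ∧ x i ∈ Z ∧ x j ∉ Z :=
    fun i j h => exists_clopen_sep (hx i j h)
  set Z : Fin k → Fin k → Set X := fun i j =>
    if h : i ≠ j then (hsep i j h).choose else univ with hZ
  have hZspec : ∀ i j (h : i ≠ j), IsClopen (Z i j) ∧ x i ∈ Z i j ∧ x j ∉ Z i j := by
    intro i j h; simp only [hZ, dif_pos h]; exact (hsep i j h).choose_spec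
  set W : Fin k → Set X := fun i => ⋂ j, if i ≠ j then Z i j ∩ (Z j i)ᶜ else univ with hW
  have hWclopen : ∀ i, IsClopen (W i) := by
    intro i
    refine isClopen_iInter_of_finite fun j => ?_
    by_cases h : i ≠ j
    · simp only [if_pos h]
      exact ((hZspec i j h).1).inter ((hZspec j i (Ne.symm h)).1).compl
    · simp only [if_neg h]; exact isClopen_univ
  have hxW : ∀ i, x i ∈ W i := by
    intro i
    refine mem_iInter.2 fun j => ?_
    by_cases h : i ≠ j
    · simp only [if_pos h]
      exact ⟨(hZspec i j h).2.1, (hZspec j i (Ne.symm h)).2.2⟩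
    · simp only [if_neg h]; exact mem_univ _
  have hWsub : ∀ i j (h : i ≠ j), W i ⊆ (Z j i)ᶜ := by
    intro i j h
    refine (iInter_subset _ j).trans ?_
    simp only [if_pos h]
    exact inter_subset_right
  have hWsub2 : ∀ i j (h : i ≠ j), W i ⊆ Z i j := by
    intro i j h
    refine (iInter_subset _ j).trans ?_
    simp only [if_pos h]
    exact inter_subset_left
  have hWd : Pairwise (Function.onFun Disjoint W) := by
    intro i j h
    exact Set.disjoint_left.2 fun a ha hb =>
      (hWsub i j h ha) (hWsub2 j i (Ne.symm h) hb)
  set P : Fin k → Set X := fun i =>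
    if i = i₀ then ⋂ j : {j : Fin k // j ≠ i₀}, (W j.1)ᶜ else W i with hP
  have hPmain : ∀ i, i ≠ i₀ → P i = W i := fun i h => by simp [hP, h]
  have hP0 : P i₀ = ⋂ j : {j : Fin k // j ≠ i₀}, (W j.1)ᶜ := by simp [hP]
  refine ⟨P, ?_, ?_, ?_, ?_⟩
  · intro i
    by_cases h : i = i₀
    · rw [h, hP0]
      exact isClopen_iInter_of_finite fun j => (hWclopen j.1).compl
    · rw [hPmain i h]; exact hWclopen i
  · intro i
    by_cases h : i = i₀
    · subst h
      rw [hP0]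
      refine mem_iInter.2 fun j => ?_
      exact fun hmem => hWsub j.1 i₀ j.2 hmem (hZspec i₀ j.1 (Ne.symm j.2)).2.1
    · rw [hPmain i h]; exact hxW i
  · intro i j h
    simp only [Function.onFun]
    by_cases hi : i = i₀
    · subst hi
      rw [hP0, hPmain j (Ne.symm h)]
      exact Set.disjoint_left.2 fun a ha hb =>
        (mem_iInter.1 ha ⟨j, Ne.symm h⟩) hb
    · by_cases hj : j = i₀
      · subst hj
        rw [hP0, hPmain i hi]
        exact Set.disjoint_left.2 fun a ha hb =>
          (mem_iInter.1 hb ⟨i, hi⟩) ha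
      · rw [hPmain i hi, hPmain j hj]
        exact hWd h
  · apply eq_univ_of_forall
    intro a
    by_cases hmem : ∃ j : Fin k, j ≠ i₀ ∧ a ∈ W j
    · obtain ⟨j, hj, haj⟩ := hmem
      exact mem_iUnion.2 ⟨j, by rw [hPmain j hj]; exact haj⟩
    · push_neg at hmem
      refine mem_iUnion.2 ⟨i₀, ?_⟩
      rw [hP0]
      exact mem_iInter.2 fun j => hmem j.1 j.2

end Clopen

section Ambient

lemma exists_sep_opens_of_cc {K : Set HilbertCube} (hK : IsCompact K)
    {k : ℕ} (hk : 0 < k) (x : Fin k → ↥K)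
    (hx : ∀ i j, i ≠ j →
      ConnectedComponents.mk (x i) ≠ ConnectedComponents.mk (x j)) :
    ∃ V : Fin k → Set HilbertCube, (∀ i, IsOpen (V i)) ∧
      Pairwise (Function.onFun Disjoint V) ∧ K ⊆ ⋃ i, V i ∧
      ∀ i, (K ∩ V i).Nonempty := by
  haveI : CompactSpace ↥K := isCompact_iff_compactSpace.1 hK
  obtain ⟨P, hPclopen, hxP, hPd, hPcover⟩ := exists_clopen_partition hk x hx
  set Q : Fin k → Set HilbertCube := fun i => Subtype.val '' P i with hQ
  have hQcompact : ∀ i, IsCompact (Q i) :=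
    fun i => ((hPclopen i).isClosed.isCompact).image continuous_subtype_val
  have hQd : Pairwise (Function.onFun Disjoint Q) := by
    intro i j h
    refine Set.disjoint_left.2 ?_
    rintro a ⟨z, hz, rfl⟩ ⟨w, hw, hwz⟩
    have : w = z := Subtype.ext hwz
    exact Set.disjoint_left.1 (hPd h) hz (this ▸ hw)
  obtain ⟨V, hVo, hQV, hVd⟩ := exists_disjoint_opens Q hQcompact hQd
  refine ⟨V, hVo, hVd, ?_, ?_⟩
  · intro a ha
    have : (⟨a, ha⟩ : ↥K) ∈ ⋃ i, P i := hPcover ▸ mem_univ _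
    rcases mem_iUnion.1 this with ⟨i, hi⟩
    exact mem_iUnion.2 ⟨i, hQV i ⟨_, hi, rfl⟩⟩
  · intro i
    exact ⟨x i, (x i).2, hQV i ⟨x i, hxP i, rfl⟩⟩

lemma exists_sep_opens_of_infinite_cc {K : Set HilbertCube} (hK : IsCompact K)
    (hcc : Infinite (ConnectedComponents ↥K)) {k : ℕ} (hk : 0 < k) :
    ∃ V : Fin k → Set HilbertCube, (∀ i, IsOpen (V i)) ∧
      Pairwise (Function.onFun Disjoint V) ∧ K ⊆ ⋃ i, V i ∧
      ∀ i, (K ∩ V i).Nonempty := by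
  classical
  obtain ⟨s, hscard⟩ := Infinite.exists_subset_card_eq (ConnectedComponents ↥K) k
  have he : Nonempty (Fin k ≃ ↥(s : Finset (ConnectedComponents ↥K))) := by
    rw [← hscard]
    exact ⟨(s.equivFin).symm⟩
  obtain ⟨e⟩ := he
  have hsurj := ConnectedComponents.surjective_coe (α := ↥K)
  set x : Fin k → ↥K := fun i => (hsurj (e i).1).choose with hxdef
  have hxspec : ∀ i, ConnectedComponents.mk (x i) = (e i).1 :=
    fun i => (hsurj (e i).1).choose_spec
  refine exists_sep_opens_of_cc hK hk x fun i j h heq => ?_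
  apply h
  apply e.injective
  exact Subtype.ext (by rw [← hxspec i, ← hxspec j, heq])

end Ambient

section Count

lemma cc_injective_of_points {ι : Type*} {V : ι → Set HilbertCube}
    (hVo : ∀ i, IsOpen (V i)) (hVd : Pairwise (Function.onFun Disjoint V))
    {L : Set HilbertCube} (hsub : L ⊆ ⋃ i, V i)
    (p : ι → HilbertCube) (hp : ∀ i, p i ∈ L ∩ V i) :
    Function.Injective fun i =>
      ConnectedComponents.mk (⟨p i, (hp i).1⟩ : ↥L) := by
  intro i j h
  exact index_eq_of_mk_eq hVo hVd hsub (hp i).2 (hp j).2 h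

lemma tle_m0_of_card_ge {m₀ : ℕ} (hm₀ : 0 < m₀) {L : Set HilbertCube}
    (h : ∀ _ : Finite (ConnectedComponents ↥L),
      m₀ ≤ Nat.card (ConnectedComponents ↥L)) :
    tle (some (m₀, 0)) (typeOf ↥L) := by
  by_cases hfin : Finite (ConnectedComponents ↥L)
  · rw [typeOf_eq_of_finite hfin]
    exact Or.inr ⟨hm₀, h hfin, Nat.zero_le _⟩
  · rw [typeOf_eq_of_infinite (not_finite_iff_infinite.1 hfin)]
    exact hm₀

end Count

section Case2

lemma fib_eq_cc {K : Set HilbertCube} (y : ↥K) :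
    {x : ↥K | ConnectedComponents.mk x = ConnectedComponents.mk y}
      = connectedComponent y := by
  ext x
  exact ConnectedComponents.coe_eq_coe'

lemma case2_data {K : Set HilbertCube} (hK : IsCompact K)
    (hfin : Finite (ConnectedComponents ↥K)) (m₀ : ℕ) :
    ∃ (V : ConnectedComponents ↥K → Set HilbertCube)
      (B : {c : ConnectedComponents ↥K //
          ¬ ({x : ↥K | ConnectedComponents.mk x = c} : Set ↥K).Subsingleton} →
        Fin (m₀ + 1) → Set HilbertCube),
      (∀ c, IsOpen (V c)) ∧ Pairwise (Function.onFun Disjoint V) ∧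
      K ⊆ ⋃ c, V c ∧ (∀ c, (K ∩ V c).Nonempty) ∧
      (∀ c j, IsOpen (B c j)) ∧ (∀ c, Pairwise (Function.onFun Disjoint (B c))) ∧
      (∀ c j, B c j ⊆ V c.1) ∧ (∀ c j, (K ∩ B c j).Nonempty) := by
  classical
  haveI : CompactSpace ↥K := isCompact_iff_compactSpace.1 hK
  set fib : ConnectedComponents ↥K → Set ↥K :=
    fun c => {x : ↥K | ConnectedComponents.mk x = c} with hfib
  have hrep : ∀ c, ∃ y : ↥K, ConnectedComponents.mk y = c :=
    fun c => ConnectedComponents.surjective_coe c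
  have hfib_cc : ∀ c, ∃ y : ↥K, fib c = connectedComponent y := by
    intro c
    obtain ⟨y, rfl⟩ := hrep c
    exact ⟨y, fib_eq_cc y⟩
  have hfibclosed : ∀ c, IsClosed (fib c) := by
    intro c; obtain ⟨y, hy⟩ := hfib_cc c; rw [hy]; exact isClosed_connectedComponent
  have hfibpre : ∀ c, IsPreconnected (fib c) := by
    intro c; obtain ⟨y, hy⟩ := hfib_cc c; rw [hy]; exact isPreconnected_connectedComponent
  have hfibne : ∀ c, (fib c).Nonempty := fun c => (hrep c).imp fun y hy => hy
  set Q : ConnectedComponents ↥K → Set HilbertCube :=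
    fun c => Subtype.val '' fib c with hQdef
  have hQcompact : ∀ c, IsCompact (Q c) :=
    fun c => ((hfibclosed c).isCompact).image continuous_subtype_val
  have hQd : Pairwise (Function.onFun Disjoint Q) := by
    intro c d h
    refine Set.disjoint_left.2 ?_
    rintro a ⟨z, hz, rfl⟩ ⟨w, hw, hwz⟩
    have : w = z := Subtype.ext hwz
    subst this
    exact h (hz.symm.trans hw)
  obtain ⟨V, hVo, hQV, hVd⟩ := exists_disjoint_opens Q hQcompact hQd
  have hKsub : K ⊆ ⋃ c, V c := by
    intro a ha
    exact mem_iUnion.2 ⟨ConnectedComponents.mk ⟨a, ha⟩,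
      hQV _ ⟨⟨a, ha⟩, rfl, rfl⟩⟩
  have hKV : ∀ c, (K ∩ V c).Nonempty := by
    intro c
    obtain ⟨y, hy⟩ := hfibne c
    exact ⟨y.1, y.2, hQV c ⟨y, hy, rfl⟩⟩
  -- construct the B's, one nondegenerate component at a time
  have hBex : ∀ c : {c : ConnectedComponents ↥K //
      ¬ ({x : ↥K | ConnectedComponents.mk x = c} : Set ↥K).Subsingleton},
      ∃ B : Fin (m₀ + 1) → Set HilbertCube,
        (∀ j, IsOpen (B j)) ∧ Pairwise (Function.onFun Disjoint B) ∧
        (∀ j, B j ⊆ V c.1) ∧ (∀ j, (K ∩ B j).Nonempty) := by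
    rintro ⟨c, hc⟩
    have hnontriv : (Q c).Nontrivial := by
      obtain ⟨x, hx, y, hy, hxy⟩ := Set.not_subsingleton_iff.1 hc
      exact ⟨x.1, ⟨x, hx, rfl⟩, y.1, ⟨y, hy, rfl⟩, fun h => hxy (Subtype.ext h)⟩
    have hQpre : IsPreconnected (Q c) :=
      (hfibpre c).image _ continuous_subtype_val.continuousOn
    have hinf : (Q c).Infinite := hQpre.infinite_of_nontrivial hnontriv
    obtain ⟨T, hTsub, hTcard⟩ := hinf.exists_subset_card_eq (m₀ + 1)
    set e : Fin (m₀ + 1) ≃ ↥T := (finCongr hTcard).symm.trans T.equivFin.symm with he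
    set z : Fin (m₀ + 1) → HilbertCube := fun j => (e j).1 with hz
    have hzinj : Function.Injective z :=
      fun i j h => e.injective (Subtype.ext h)
    have hzQ : ∀ j, z j ∈ Q c := fun j => hTsub (e j).2
    have hsing : Pairwise (Function.onFun Disjoint (fun j => ({z j} : Set HilbertCube))) := by
      intro i j h
      exact Set.disjoint_left.2 fun a ha hb =>
        h (hzinj ((mem_singleton_iff.1 ha).symm.trans (mem_singleton_iff.1 hb)))
    obtain ⟨O, hOo, hzO, hOd⟩ := exists_disjoint_opens (fun j => {z j})
      (fun j => isCompact_singleton) hsing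
    refine ⟨fun j => O j ∩ V c, fun j => (hOo j).inter (hVo c), ?_, ?_, ?_⟩
    · intro i j h
      exact (hOd h).mono inter_subset_left inter_subset_left
    · exact fun j => inter_subset_right
    · intro j
      have hzK : z j ∈ K := by
        obtain ⟨w, -, hw⟩ := hzQ j
        exact hw ▸ w.2
      exact ⟨z j, hzK, hzO j rfl, hQV c (hzQ j)⟩
  choose B hBo hBd hBV hBne using hBex
  exact ⟨V, B, hVo, hVd, hKsub, hKV, hBo, hBd, hBV, hBne⟩

end Case2

section Case2Member

lemma case2_counts {K L : Set HilbertCube} {m₀ : ℕ}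
    (V : ConnectedComponents ↥K → Set HilbertCube)
    (B : {c : ConnectedComponents ↥K //
        ¬ ({x : ↥K | ConnectedComponents.mk x = c} : Set ↥K).Subsingleton} →
      Fin (m₀ + 1) → Set HilbertCube)
    (hVo : ∀ c, IsOpen (V c)) (hVd : Pairwise (Function.onFun Disjoint V))
    (hBd : ∀ c, Pairwise (Function.onFun Disjoint (B c)))
    (hBV : ∀ c j, B c j ⊆ V c.1)
    (hLV : L ⊆ ⋃ c, V c) (hLmeet : ∀ c, (L ∩ V c).Nonempty)
    (hLB : ∀ c j, (L ∩ B c j).Nonempty)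
    (hfinL : Finite (ConnectedComponents ↥L))
    (hcard : Nat.card (ConnectedComponents ↥L) < m₀) :
    Nat.card (ConnectedComponents ↥K) ≤ Nat.card (ConnectedComponents ↥L) ∧
    Nat.card {c : ConnectedComponents ↥K |
        ¬ ({x : ↥K | ConnectedComponents.mk x = c} : Set ↥K).Subsingleton} ≤
      Nat.card {e : ConnectedComponents ↥L |
        ¬ ({x : ↥L | ConnectedComponents.mk x = e} : Set ↥L).Subsingleton} := by
  classical
  constructor
  · set p : ConnectedComponents ↥K → HilbertCube := fun c => (hLmeet c).choose with hp
    have hpmem : ∀ c, p c ∈ L ∩ V c := fun c => (hLmeet c).choose_spec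
    exact Nat.card_le_card_of_injective _
      (cc_injective_of_points hVo hVd hLV p hpmem)
  · have hΦex : ∀ c : {c : ConnectedComponents ↥K //
        ¬ ({x : ↥K | ConnectedComponents.mk x = c} : Set ↥K).Subsingleton},
        ∃ e : ConnectedComponents ↥L,
          ¬ ({x : ↥L | ConnectedComponents.mk x = e} : Set ↥L).Subsingleton ∧
          ∃ x : ↥L, ConnectedComponents.mk x = e ∧ x.1 ∈ V c.1 := by
      intro c
      set q : Fin (m₀ + 1) → HilbertCube := fun j => (hLB c j).choose with hq
      have hqmem : ∀ j, q j ∈ L ∩ B c j := fun j => (hLB c j).choose_spec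
      set f : Fin (m₀ + 1) → ConnectedComponents ↥L :=
        fun j => ConnectedComponents.mk ⟨q j, (hqmem j).1⟩ with hfdef
      have hninj : ¬ Function.Injective f := by
        intro hinj
        have := Nat.card_le_card_of_injective f hinj
        simp only [Nat.card_eq_fintype_card, Fintype.card_fin] at this
        omega
      obtain ⟨j, j', heq, hne⟩ := Function.not_injective_iff.1 hninj
      refine ⟨f j, ?_, ⟨q j, (hqmem j).1⟩, rfl, hBV c j (hqmem j).2⟩
      intro hss
      have hqq : q j ≠ q j' := by
        intro h
        exact Set.disjoint_left.1 (hBd c hne) (hqmem j).2 (h ▸ (hqmem j').2)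
      exact hqq (congrArg Subtype.val
        (hss (by exact rfl) (by exact heq.symm)))
    choose Φ hΦnd hΦpt using hΦex
    have hΦinj : Function.Injective Φ := by
      intro c c' h
      obtain ⟨x, hx, hxV⟩ := hΦpt c
      obtain ⟨x', hx', hxV'⟩ := hΦpt c'
      have : ConnectedComponents.mk x = ConnectedComponents.mk x' := by
        rw [hx, hx', h]
      exact Subtype.ext (index_eq_of_mk_eq hVo hVd hLV hxV hxV' this)
    exact Nat.card_le_card_of_injective
      (fun c => (⟨Φ c, hΦnd c⟩ : {e : ConnectedComponents ↥L |
        ¬ ({x : ↥L | ConnectedComponents.mk x = e} : Set ↥L).Subsingleton}))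
      (fun c c' h => hΦinj (congrArg Subtype.val h))

end Case2Member

theorem stmt18 (R : Set (Option (ℕ × ℕ))) (hR : ∀ o ∈ R, isType o) :
    IsOpen {K : Kt HilbertCube | ∃ o ∈ R, tle o (typeOf ↥K.1)} ↔
      ((∃ o ∈ R, o ≠ some (0, 0)) → ∃ m : ℕ, 0 < m ∧ some (m, 0) ∈ R) := by
  classical
  set S := {K : Kt HilbertCube | ∃ o ∈ R, tle o (typeOf ↥K.1)} with hSdef
  constructor
  · rintro hopen ⟨o, hoR, hone⟩
    have hKin : (⟨cantorK, cantorK_isCompact⟩ : Kt HilbertCube) ∈ S := by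
      refine ⟨o, hoR, ?_⟩
      rw [show typeOf ↥(⟨cantorK, cantorK_isCompact⟩ : Kt HilbertCube).1 = none from
        typeOf_eq_of_infinite cantorK_cc_infinite]
      match o, hone with
      | none, _ => trivial
      | some p, hne =>
        show 0 < p.1
        rcases p with ⟨a, b⟩
        have hb : b ≤ a := hR _ hoR
        by_contra h
        push_neg at h
        have ha : a = 0 := Nat.le_zero.1 h
        have hb0 : b = 0 := Nat.le_zero.1 (ha ▸ hb)
        exact hne (by rw [ha, hb0])
    obtain ⟨D, hDfin, hDsub, hDF⟩ := kt_finite_approx hopen _ hKin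
    have h0mem : (fun _ => 0 : HilbertCube) ∈ cantorK := fun i => Or.inl rfl
    set F : Set HilbertCube := insert (fun _ => 0) D with hFdef
    have hFfin : F.Finite := hDfin.insert _
    have hFsub : F ⊆ cantorK := insert_subset h0mem hDsub
    have hFS := hDF F hFfin (subset_insert _ _) hFsub
    haveI : Finite ↥F := hFfin.to_subtype
    haveI : Nonempty ↥F := (insert_nonempty _ _).to_subtype
    have hT : typeOf ↥F = some (Nat.card ↥F, 0) := typeOf_of_finite
    have hpos : 0 < Nat.card ↥F := Nat.card_pos
    obtain ⟨o', ho'R, ho'le⟩ := hFS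
    have ho'le' : tle o' (some (Nat.card ↥F, 0)) := by rwa [hT] at ho'le
    match o', ho'le' with
    | some p, Or.inl ⟨hp, hq⟩ =>
      exact absurd (Prod.ext_iff.1 hq).1 hpos.ne'
    | some p, Or.inr ⟨h1, h2, h3⟩ =>
      have hp2 : p.2 = 0 := Nat.le_zero.1 h3
      exact ⟨p.1, h1, by rwa [show (p.1, 0) = p from Prod.ext rfl hp2.symm]⟩
  · intro hnice
    rw [isOpen_iff_forall_mem_open]
    rintro K ⟨o, hoR, hole⟩
    by_cases ho0 : o = some (0, 0)
    · subst ho0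
      -- K must be empty
      have hempty : K.1 = ∅ := by
        by_cases hfin : Finite (ConnectedComponents ↥K.1)
        · rw [typeOf_eq_of_finite hfin] at hole
          rcases hole with ⟨-, h2⟩ | ⟨h1, -, -⟩
          · have hc0 : Nat.card (ConnectedComponents ↥K.1) = 0 :=
              (Prod.ext_iff.1 h2).1
            rcases Nat.card_eq_zero.1 hc0 with he | hi
            · by_contra hne
              rcases nonempty_iff_ne_empty.2 hne with ⟨a, ha⟩
              exact he.false (ConnectedComponents.mk ⟨a, ha⟩)
            · exact absurd hfin hi.not_finite
          · exact absurd (show (0:ℕ) < 0 from h1) (lt_irrefl 0)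
        · rw [typeOf_eq_of_infinite (not_finite_iff_infinite.1 hfin)] at hole
          exact absurd (show (0:ℕ) < 0 from hole) (lt_irrefl 0)
      refine ⟨{A : Kt HilbertCube | A.1 ⊆ (∅ : Set HilbertCube)}, ?_,
        kt_isOpen_sub ∅ isOpen_empty, by simp [hempty]⟩
      intro A hA
      have hAempty : A.1 = ∅ := subset_empty_iff.1 hA
      haveI : IsEmpty ↥A.1 := by rw [hAempty]; infer_instance
      refine ⟨some (0, 0), hoR, ?_⟩
      have : typeOf ↥A.1 = some (Nat.card ↥A.1, 0) := typeOf_of_finite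
      rw [this, Nat.card_of_isEmpty]
      exact Or.inl ⟨rfl, rfl⟩
    · obtain ⟨m₀, hm₀, hm₀R⟩ := hnice ⟨o, hoR, ho0⟩
      by_cases hfin : Finite (ConnectedComponents ↥K.1)
      · -- finitely many components
        haveI := hfin
        rw [typeOf_eq_of_finite hfin] at hole
        match o, hole, ho0 with
        | none, hole, _ => exact hole.elim
        | some p, Or.inl ⟨hp0, _⟩, ho0 => exact absurd (congrArg some hp0) ho0
        | some p, Or.inr ⟨hp1, hp2, hp3⟩, ho0 =>
          obtain ⟨V, B, hVo, hVd, hKsub, hKmeet, hBo, hBd, hBV, hBne⟩ :=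
            case2_data K.2 hfin m₀
          refine ⟨({A : Kt HilbertCube | A.1 ⊆ ⋃ c, V c} ∩
            ⋂ c, {A : Kt HilbertCube | (A.1 ∩ V c).Nonempty}) ∩
            ⋂ c, ⋂ j, {A : Kt HilbertCube | (A.1 ∩ B c j).Nonempty}, ?_, ?_, ?_⟩
          · rintro L ⟨⟨hL1, hL2⟩, hL3⟩
            have hLmeet : ∀ c, (L.1 ∩ V c).Nonempty := mem_iInter.1 hL2
            have hLB : ∀ c j, (L.1 ∩ B c j).Nonempty :=
              fun c j => mem_iInter.1 (mem_iInter.1 hL3 c) j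
            by_cases hL : Finite (ConnectedComponents ↥L.1) ∧
                Nat.card (ConnectedComponents ↥L.1) < m₀
            · obtain ⟨hcle, hnle⟩ := case2_counts V B hVo hVd hBd hBV hL1
                hLmeet hLB hL.1 hL.2
              refine ⟨some p, hoR, ?_⟩
              rw [typeOf_eq_of_finite hL.1]
              exact Or.inr ⟨hp1, hp2.trans hcle, hp3.trans hnle⟩
            · refine ⟨some (m₀, 0), hm₀R, tle_m0_of_card_ge hm₀ fun hfinL => ?_⟩
              by_contra hlt
              exact hL ⟨hfinL, by omega⟩
          · refine ((kt_isOpen_sub _ (isOpen_iUnion hVo)).inter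
              (isOpen_iInter_of_finite fun c => kt_isOpen_hit _ (hVo c))).inter
              (isOpen_iInter_of_finite fun c => isOpen_iInter_of_finite fun j =>
                kt_isOpen_hit _ (hBo c j))
          · exact ⟨⟨hKsub, mem_iInter.2 hKmeet⟩,
              mem_iInter.2 fun c => mem_iInter.2 fun j => hBne c j⟩
      · -- infinitely many components
        obtain ⟨V, hVo, hVd, hKsub, hKmeet⟩ :=
          exists_sep_opens_of_infinite_cc K.2 (not_finite_iff_infinite.1 hfin) hm₀
        refine ⟨{A : Kt HilbertCube | A.1 ⊆ ⋃ i, V i} ∩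
          ⋂ i, {A : Kt HilbertCube | (A.1 ∩ V i).Nonempty}, ?_, ?_, ?_⟩
        · rintro L ⟨hL1, hL2⟩
          have hLmeet : ∀ i, (L.1 ∩ V i).Nonempty := mem_iInter.1 hL2
          refine ⟨some (m₀, 0), hm₀R, tle_m0_of_card_ge hm₀ fun hfinL => ?_⟩
          set q : Fin m₀ → HilbertCube := fun i => (hLmeet i).choose with hq
          have hqmem : ∀ i, q i ∈ L.1 ∩ V i := fun i => (hLmeet i).choose_spec
          have hinj := cc_injective_of_points hVo hVd hL1 q hqmem
          have := Nat.card_le_card_of_injective _ hinj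
          simpa using this
        · exact (kt_isOpen_sub _ (isOpen_iUnion hVo)).inter
            (isOpen_iInter_of_finite fun i => kt_isOpen_hit _ (hVo i))
        · exact ⟨hKsub, mem_iInter.2 hKmeet⟩
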